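/- Let F be a spanning subgraph of K_n with maximum degree at most d, and let I be a subgraph of K_n with c connected components I₁,...,I_c, all contained in at least one copy of F. Then the number of copies of F in K_n containing I is at most (2d)^{|E(I)|}/|Aut(F)| · (n − v(I) + c)!. -/

import Mathlib

open SimpleGraph

namespace Stmt12

variable {n : ℕ}

/-- Reversed tree order: every element except the last has a `J`-neighbor later in the list. -/
def TreeRev (J : SimpleGraph (Fin n)) : List (Fin n) → Prop
  | [] => True
  | x :: t => (t = [] ∨ ∃ w ∈ t, J.Adj x w) ∧ TreeRev J t

variable (F I : SimpleGraph (Fin n))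

/-- Partial embeddings of `I` restricted to `s` into `F`, extended by the identity. -/
def GoodP (s : Finset (Fin n)) (φ : Fin n → Fin n) : Prop :=
  Set.InjOn φ ↑s ∧ (∀ a ∈ s, ∀ b ∈ s, I.Adj a b → F.Adj (φ a) (φ b)) ∧ ∀ x ∉ s, φ x = x

open scoped Classical in
noncomputable def CntF (s : Finset (Fin n)) : Finset (Fin n → Fin n) :=
  (Finset.univ : Finset (Fin n → Fin n)).filter (GoodP F I s)

lemma mem_CntF {s : Finset (Fin n)} {φ : Fin n → Fin n} :
    φ ∈ CntF F I s ↔ GoodP F I s φ := by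
  classical
  simp [CntF]

lemma cntF_empty : (CntF F I ∅).card = 1 := by
  classical
  have : CntF F I ∅ = {id} := by
    ext φ
    simp only [mem_CntF, Finset.mem_singleton, GoodP]
    constructor
    · rintro ⟨-, -, h⟩
      funext x
      exact h x (by simp)
    · rintro rfl
      refine ⟨by simp [Set.InjOn], by simp, fun x _ => rfl⟩
  simp [this]

variable {F I}

lemma update_mem_CntF {s : Finset (Fin n)} {u : Fin n} (hu : u ∉ s)
    {φ : Fin n → Fin n} (hφ : φ ∈ CntF F I (insert u s)) :
    Function.update φ u u ∈ CntF F I s := by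
  rw [mem_CntF] at hφ ⊢
  obtain ⟨hinj, hedge, hid⟩ := hφ
  have hupd : ∀ x ∈ s, Function.update φ u u x = φ x := by
    intro x hx
    refine Function.update_of_ne ?_ _ _
    rintro rfl; exact hu hx
  refine ⟨fun a ha b hb hab => ?_, fun a ha b hb hab => ?_, fun x hx => ?_⟩
  · rw [hupd a ha, hupd b hb] at hab
    exact hinj (by simp [ha]) (by simp [hb]) hab
  · rw [hupd a ha, hupd b hb]
    exact hedge a (by simp [ha]) b (by simp [hb]) hab
  · by_cases hxu : x = u
    · subst hxu; simp
    · rw [Function.update_of_ne hxu]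
      exact hid x (by simp [hx, hxu])

/-- Fiber bound machinery: generic step lemma. -/
lemma cnt_insert_le {s : Finset (Fin n)} {u : Fin n} (hu : u ∉ s)
    (k : ℕ)
    (hfib : ∀ ψ ∈ CntF F I s,
      ((CntF F I (insert u s)).filter (fun φ => Function.update φ u u = ψ)).card ≤ k) :
    (CntF F I (insert u s)).card ≤ k * (CntF F I s).card := by
  classical
  rw [Finset.card_eq_sum_card_fiberwise (f := fun φ => Function.update φ u u)
    (t := CntF F I s) (fun φ hφ => update_mem_CntF hu hφ)]
  calc ∑ ψ ∈ CntF F I s, ((CntF F I (insert u s)).filter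
        (fun φ => Function.update φ u u = ψ)).card
      ≤ ∑ _ψ ∈ CntF F I s, k := Finset.sum_le_sum hfib
    _ = k * (CntF F I s).card := by rw [Finset.sum_const, smul_eq_mul, mul_comm]

lemma fiber_inj {s : Finset (Fin n)} {u : Fin n} {ψ : Fin n → Fin n} :
    Set.InjOn (fun φ : Fin n → Fin n => φ u)
      ↑((CntF F I (insert u s)).filter (fun φ => Function.update φ u u = ψ)) := by
  classical
  intro φ₁ h1 φ₂ h2 h
  simp only [Finset.coe_filter, Set.mem_setOf_eq] at h1 h2
  funext x
  by_cases hxu : x = u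
  · subst hxu; exact h
  · have := congrFun (h1.2.trans h2.2.symm) x
    rwa [Function.update_of_ne hxu, Function.update_of_ne hxu] at this

lemma cnt_insert_root {s : Finset (Fin n)} {u : Fin n} (hu : u ∉ s) :
    (CntF F I (insert u s)).card ≤ (n - s.card) * (CntF F I s).card := by
  classical
  refine cnt_insert_le hu _ (fun ψ hψ => ?_)
  have hψ' := (mem_CntF F I).mp hψ
  have hmaps : ∀ φ ∈ (CntF F I (insert u s)).filter (fun φ => Function.update φ u u = ψ),
      φ u ∈ Finset.univ \ s.image ψ := by
    intro φ hφ
    rw [Finset.mem_filter] at hφ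
    obtain ⟨hφmem, hφupd⟩ := hφ
    obtain ⟨hinj, -, -⟩ := (mem_CntF F I).mp hφmem
    simp only [Finset.mem_sdiff, Finset.mem_univ, true_and, Finset.mem_image, not_exists]
    rintro x ⟨hx, hx2⟩
    have hxu : x ≠ u := by rintro rfl; exact hu hx
    have hpx : ψ x = φ x := by
      rw [← hφupd, Function.update_of_ne hxu]
    rw [hpx] at hx2
    exact hxu (hinj (by simp [hx]) (by simp) hx2)
  calc ((CntF F I (insert u s)).filter (fun φ => Function.update φ u u = ψ)).card
      ≤ (Finset.univ \ s.image ψ).card := Finset.card_le_card_of_injOn _ hmaps fiber_inj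
    _ = n - s.card := by
        rw [Finset.card_sdiff_of_subset (Finset.subset_univ _), Finset.card_univ, Fintype.card_fin,
          Finset.card_image_of_injOn hψ'.1]


variable (d : ℕ)

lemma cnt_insert_child (hdeg : ∀ v : Fin n, (F.neighborSet v).ncard ≤ d)
    {s : Finset (Fin n)} {u w : Fin n} (hu : u ∉ s) (hw : w ∈ s) (hadj : I.Adj u w) :
    (CntF F I (insert u s)).card ≤ d * (CntF F I s).card := by
  classical
  refine cnt_insert_le hu _ (fun ψ hψ => ?_)
  have hmaps : ∀ φ ∈ (CntF F I (insert u s)).filter (fun φ => Function.update φ u u = ψ),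
      φ u ∈ (Set.toFinite (F.neighborSet (ψ w))).toFinset := by
    intro φ hφ
    rw [Finset.mem_filter] at hφ
    obtain ⟨hφmem, hφupd⟩ := hφ
    obtain ⟨-, hedge, -⟩ := (mem_CntF F I).mp hφmem
    have hwu : w ≠ u := by rintro rfl; exact hu hw
    have hφw : φ w = ψ w := by rw [← hφupd, Function.update_of_ne hwu]
    have := hedge u (by simp) w (by simp [hw]) hadj
    rw [hφw] at this
    rw [Set.Finite.mem_toFinset]
    exact this.symm
  calc ((CntF F I (insert u s)).filter (fun φ => Function.update φ u u = ψ)).card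
      ≤ (Set.toFinite (F.neighborSet (ψ w))).toFinset.card :=
        Finset.card_le_card_of_injOn _ hmaps fiber_inj
    _ = (F.neighborSet (ψ w)).ncard := (Set.ncard_eq_toFinset_card _ _).symm
    _ ≤ d := hdeg _

lemma cnt_block (hdeg : ∀ v : Fin n, (F.neighborSet v).ncard ≤ d) :
    ∀ (B : List (Fin n)), B ≠ [] → B.Nodup → TreeRev I B →
    ∀ (T : Finset (Fin n)), (∀ x ∈ B, x ∉ T) →
    (CntF F I (B.toFinset ∪ T)).card ≤ (n - T.card) * d ^ (B.length - 1) * (CntF F I T).card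
  | [], h, _, _, _, _ => absurd rfl h
  | [x], _, _, _, T, hdisj => by
      classical
      have hset : ([x] : List (Fin n)).toFinset ∪ T = insert x T := by
        ext z; simp
      rw [hset]
      simpa using cnt_insert_root (s := T) (u := x) (hdisj x (by simp))
  | x :: y :: t, _, hnd, htr, T, hdisj => by
      classical
      obtain ⟨hor, htr'⟩ := htr
      obtain ⟨w, hwmem, hadj⟩ : ∃ w ∈ y :: t, I.Adj x w := by
        rcases hor with h | h
        · exact absurd h (by simp)
        · exact h
      have hnd' : (y :: t).Nodup := hnd.of_cons
      have hxnot : x ∉ (y :: t).toFinset ∪ T := by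
        simp only [Finset.mem_union, List.mem_toFinset]
        rintro (h | h)
        · exact (List.nodup_cons.mp hnd).1 h
        · exact hdisj x (by simp) h
      have hins : (x :: y :: t).toFinset ∪ T = insert x ((y :: t).toFinset ∪ T) := by
        simp [Finset.insert_union]
      have h1 : (CntF F I ((x :: y :: t).toFinset ∪ T)).card
          ≤ d * (CntF F I ((y :: t).toFinset ∪ T)).card := by
        rw [hins]
        exact cnt_insert_child d hdeg hxnot
          (by simp only [Finset.mem_union, List.mem_toFinset]; exact Or.inl hwmem) hadj
      have h2 := cnt_block hdeg (y :: t) (by simp) hnd' htr' T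
        (fun z hz => hdisj z (by simp [hz]))
      calc (CntF F I ((x :: y :: t).toFinset ∪ T)).card
          ≤ d * (CntF F I ((y :: t).toFinset ∪ T)).card := h1
        _ ≤ d * ((n - T.card) * d ^ ((y :: t).length - 1) * (CntF F I T).card) :=
            Nat.mul_le_mul_left d h2
        _ = (n - T.card) * d ^ ((x :: y :: t).length - 1) * (CntF F I T).card := by
            have hlen : (x :: y :: t).length - 1 = ((y :: t).length - 1) + 1 := by
              simp
            rw [hlen, pow_succ]
            ring

/-- The telescoped bound function: blocks listed smallest-first (placed last-first). -/
def Rfun (n d : ℕ) : List ℕ → ℕ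
  | [] => 1
  | k :: t => (n - t.sum) * d ^ (k - 1) * Rfun n d t

lemma cnt_flatten (hdeg : ∀ v : Fin n, (F.neighborSet v).ncard ≤ d) :
    ∀ (LL : List (List (Fin n))), LL.flatten.Nodup →
    (∀ B ∈ LL, B ≠ [] ∧ TreeRev I B) →
    (CntF F I LL.flatten.toFinset).card ≤ Rfun n d (LL.map List.length)
  | [], _, _ => by
      classical
      simp [Rfun, cntF_empty]
  | B :: T, hnd, hB => by
      classical
      have hndapp := hnd
      rw [List.flatten_cons, List.nodup_append] at hndapp
      obtain ⟨hndB, hndT, hdisjBT⟩ := hndapp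
      have hTcard : (T.flatten.toFinset).card = (T.map List.length).sum := by
        rw [List.toFinset_card_of_nodup hndT, List.length_flatten]
      have hstep := cnt_block d hdeg B (hB B (by simp)).1 hndB (hB B (by simp)).2
        T.flatten.toFinset (fun x hx => by
          rw [List.mem_toFinset]
          exact fun h => hdisjBT x hx x h rfl)
      have hIH := cnt_flatten hdeg T hndT (fun B' hB' => hB B' (by simp [hB']))
      have hset : (B :: T).flatten.toFinset = B.toFinset ∪ T.flatten.toFinset := by
        simp [List.flatten_cons]
      rw [hset]
      calc (CntF F I (B.toFinset ∪ T.flatten.toFinset)).card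
          ≤ (n - T.flatten.toFinset.card) * d ^ (B.length - 1)
              * (CntF F I T.flatten.toFinset).card := hstep
        _ ≤ (n - (T.map List.length).sum) * d ^ (B.length - 1)
              * Rfun n d (T.map List.length) := by
            rw [hTcard]
            exact Nat.mul_le_mul_left _ hIH
        _ = Rfun n d ((B :: T).map List.length) := by simp [Rfun]


lemma length_le_sum {l : List ℕ} (h : ∀ k ∈ l, 1 ≤ k) : l.length ≤ l.sum := by
  induction l with
  | nil => simp
  | cons k t ih =>
      simp only [List.length_cons, List.sum_cons]
      have := ih (fun k hk => h k (by simp [hk]))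
      have hk := h k (by simp)
      omega

lemma le_two_pow_pred {k : ℕ} (hk : 1 ≤ k) : k ≤ 2 ^ (k - 1) := by
  have h : k - 1 < 2 ^ (k - 1) := Nat.lt_two_pow_self
  omega

/-- Key arithmetic estimate. -/
lemma art (n d : ℕ) : ∀ (l : List ℕ), l.Pairwise (· ≤ ·) → (∀ k ∈ l, 1 ≤ k) →
    ∀ (c₀ p : ℕ), (∀ k ∈ l, p ≤ c₀ * k) → p + l.sum ≤ n →
    Rfun n d l * (n - l.sum - p + c₀).factorial ≤
      (2 * d) ^ (l.sum - l.length) * (n - l.sum - p + c₀ + l.length).factorial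
  | [], _, _, c₀, p, _, _ => by simp [Rfun]
  | k :: t, hsort, hone, c₀, p, hpc, hsum => by
      have hsort' : t.Pairwise (· ≤ ·) := hsort.of_cons
      have hk1 : 1 ≤ k := hone k (by simp)
      have hkle : ∀ k' ∈ t, k ≤ k' := fun k' hk' => (List.pairwise_cons.mp hsort).1 k' hk'
      have hone' : ∀ k' ∈ t, 1 ≤ k' := fun k' hk' => hone k' (by simp [hk'])
      have hIH := art n d t hsort' hone' (c₀ + 1) (p + k)
        (fun k' hk' => by
          have h1 := hpc k' (by simp [hk'])
          have h2 := hkle k' hk'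
          nlinarith)
        (by simp only [List.sum_cons] at hsum; omega)
      have hm' : n - t.sum - (p + k) = n - (k :: t).sum - p := by
        simp only [List.sum_cons]
        omega
      set m := n - (k :: t).sum - p with hm
      rw [hm'] at hIH
      have hts : t.length ≤ t.sum := length_le_sum hone'
      have hexp : (k :: t).sum - (k :: t).length = (k - 1) + (t.sum - t.length) := by
        simp only [List.sum_cons, List.length_cons]
        omega
      -- main per-step estimate
      have hfac : n - t.sum ≤ 2 ^ (k - 1) * (m + c₀ + 1) := by
        have h1 : n - t.sum = m + p + k := by
          rw [hm]
          simp only [List.sum_cons] at hsum ⊢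
          omega
        have h2 : p ≤ c₀ * k := hpc k (by simp)
        have h3 : m + p + k ≤ k * (m + c₀ + 1) := by nlinarith
        calc n - t.sum = m + p + k := h1
          _ ≤ k * (m + c₀ + 1) := h3
          _ ≤ 2 ^ (k - 1) * (m + c₀ + 1) := Nat.mul_le_mul_right _ (le_two_pow_pred hk1)
      -- goal after unfolding
      show (n - t.sum) * d ^ (k - 1) * Rfun n d t * (m + c₀).factorial
          ≤ (2 * d) ^ ((k :: t).sum - (k :: t).length) * (m + c₀ + (k :: t).length).factorial
      refine Nat.le_of_mul_le_mul_left ?_ (show 0 < m + c₀ + 1 by omega)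
      have hL : (m + c₀ + 1) * ((n - t.sum) * d ^ (k - 1) * Rfun n d t * (m + c₀).factorial)
          = (n - t.sum) * d ^ (k - 1) * (Rfun n d t * (m + c₀ + 1).factorial) := by
        rw [Nat.factorial_succ]
        ring
      rw [hL]
      calc (n - t.sum) * d ^ (k - 1) * (Rfun n d t * (m + c₀ + 1).factorial)
          ≤ (n - t.sum) * d ^ (k - 1)
              * ((2 * d) ^ (t.sum - t.length) * (m + c₀ + 1 + t.length).factorial) :=
            Nat.mul_le_mul_left _ hIH
        _ ≤ (2 ^ (k - 1) * (m + c₀ + 1)) * d ^ (k - 1)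
              * ((2 * d) ^ (t.sum - t.length) * (m + c₀ + 1 + t.length).factorial) :=
            Nat.mul_le_mul_right _ (Nat.mul_le_mul_right _ hfac)
        _ = (m + c₀ + 1) * ((2 * d) ^ ((k :: t).sum - (k :: t).length)
              * (m + c₀ + (k :: t).length).factorial) := by
            rw [hexp, pow_add, mul_pow]
            have : m + c₀ + (k :: t).length = m + c₀ + 1 + t.length := by
              simp only [List.length_cons]; ring
            rw [this]
            ring


section Struct

variable {J : SimpleGraph (Fin n)}

lemma treeRev_mono {J J' : SimpleGraph (Fin n)} (h : ∀ a b, J.Adj a b → J'.Adj a b) :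
    ∀ B, TreeRev J B → TreeRev J' B
  | [], _ => trivial
  | x :: t, ht => by
      obtain ⟨hor, ht'⟩ := ht
      refine ⟨?_, treeRev_mono h t ht'⟩
      rcases hor with h1 | ⟨w, hw, hadj⟩
      · exact Or.inl h1
      · exact Or.inr ⟨w, hw, h x w hadj⟩

lemma walk_cross (A : Set (Fin n)) :
    ∀ {x y : Fin n}, J.Walk x y → x ∈ A → y ∉ A →
      ∃ a b, a ∈ A ∧ b ∉ A ∧ J.Adj a b := by
  intro x y p
  induction p with
  | nil => intro hx hy; exact absurd hx hy
  | @cons u v w h q ih =>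
      intro hu hw
      by_cases hv : v ∈ A
      · exact ih hv hw
      · exact ⟨u, v, hu, hv, h⟩

/-- Every reachability class has a reversed tree order listing. -/
lemma tree_order (r : Fin n) :
    ∃ B : List (Fin n), B ≠ [] ∧ B.Nodup ∧ TreeRev J B ∧
      (∀ x, x ∈ B ↔ J.Reachable r x) := by
  classical
  -- greedy extension, by induction on the number of missing vertices
  suffices h : ∀ (m : ℕ) (acc : List (Fin n)), acc ≠ [] → acc.Nodup → TreeRev J acc →
      (∀ x ∈ acc, J.Reachable r x) → r ∈ acc →
      n - acc.length ≤ m →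
      ∃ B : List (Fin n), B ≠ [] ∧ B.Nodup ∧ TreeRev J B ∧
        (∀ x ∈ B, J.Reachable r x) ∧ (∀ x, J.Reachable r x → x ∈ B) by
    obtain ⟨B, h1, h2, h3, h4, h5⟩ := h n [r] (by simp) (by simp)
      (by exact ⟨Or.inl rfl, trivial⟩)
      (by intro x hx; simp only [List.mem_singleton] at hx; subst hx; exact SimpleGraph.Reachable.refl _)
      (by simp) (by omega)
    exact ⟨B, h1, h2, h3, fun x => ⟨h4 x, h5 x⟩⟩
  intro m
  induction m with
  | zero =>
      intro acc hne hnd htr hreach hr hlen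
      by_cases hdone : ∀ x, J.Reachable r x → x ∈ acc
      · exact ⟨acc, hne, hnd, htr, hreach, hdone⟩
      · -- impossible: acc already has n elements but something is missing
        push_neg at hdone
        obtain ⟨x, hx1, hx2⟩ := hdone
        have hle : acc.length ≤ n := by
          simpa [Fintype.card_fin] using hnd.length_le_card
        have hlenn : acc.length = n := by omega
        -- every element is in acc since acc is a nodup list of length n
        have : ∀ y : Fin n, y ∈ acc := by
          intro y
          by_contra hy
          have : (y :: acc).Nodup := by simp [hy, hnd]
          have := this.length_le_card
          simp [Fintype.card_fin, hlenn] at this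
        exact absurd (this x) hx2
  | succ m ih =>
      intro acc hne hnd htr hreach hr hlen
      by_cases hstep : ∃ u, u ∉ acc ∧ J.Reachable r u ∧ ∃ w ∈ acc, J.Adj u w
      · obtain ⟨u, hu1, hu2, w, hw1, hw2⟩ := hstep
        have hlen' : n - (u :: acc).length ≤ m := by
          have : acc.length + 1 ≤ n := by
            have h2 : (u :: acc).Nodup := by simp [hu1, hnd]
            simpa [Fintype.card_fin] using h2.length_le_card
          simp only [List.length_cons]
          omega
        exact ih (u :: acc) (by simp) (by simp [hu1, hnd])
          ⟨Or.inr ⟨w, hw1, hw2⟩, htr⟩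
          (by
            intro x hx
            rcases List.mem_cons.mp hx with rfl | hx
            · exact hu2
            · exact hreach x hx)
          (by simp [hr]) hlen'
      · -- no extension: acc is closed, so it contains the whole class
        push_neg at hstep
        refine ⟨acc, hne, hnd, htr, hreach, ?_⟩
        intro x hx
        by_contra hxacc
        obtain ⟨p⟩ := hx
        obtain ⟨a, b, ha, hb, hab⟩ := walk_cross {y | y ∈ acc} p hr hxacc
        have hbreach : J.Reachable r b := (hreach a ha).trans hab.reachable
        exact hstep b hb hbreach a ha hab.symm


/-- Deleting the reachability class `W` from `J`. -/
def delComp (J : SimpleGraph (Fin n)) (W : Set (Fin n)) : SimpleGraph (Fin n) where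
  Adj a b := J.Adj a b ∧ a ∉ W ∧ b ∉ W
  symm := by constructor; rintro a b ⟨h1, h2, h3⟩; exact ⟨h1.symm, h3, h2⟩
  loopless := by constructor; rintro a ⟨h1, -⟩; exact J.loopless.irrefl a h1

lemma reach_delComp {r : Fin n} (W : Set (Fin n)) (hW : W = {u | J.Reachable r u}) :
    ∀ {x y : Fin n}, J.Walk x y → x ∉ W → (delComp J W).Reachable x y ∧ y ∉ W := by
  have hcl : ∀ a b, a ∈ W → J.Adj a b → b ∈ W := by
    intro a b ha hab
    rw [hW] at ha ⊢
    exact ha.trans hab.reachable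
  intro x y p
  induction p with
  | nil => intro hx; exact ⟨SimpleGraph.Reachable.refl _, hx⟩
  | @cons u v w h q ih =>
      intro hu
      have hv : v ∉ W := fun hv => hu (hcl v u hv h.symm)
      obtain ⟨hr, hw⟩ := ih hv
      exact ⟨(SimpleGraph.Adj.reachable (show (delComp J W).Adj u v from ⟨h, hu, hv⟩)).trans hr, hw⟩

lemma struct_aux : ∀ (m : ℕ) (J : SimpleGraph (Fin n)), J.support.ncard ≤ m →
    ∃ LL : List (List (Fin n)),
      LL.flatten.Nodup ∧
      (∀ x, x ∈ LL.flatten ↔ x ∈ J.support) ∧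
      (∀ B ∈ LL, B ≠ [] ∧ TreeRev J B) ∧
      List.Pairwise (fun B₁ B₂ => ∀ x ∈ B₁, ∀ y ∈ B₂, ¬ J.Reachable x y) LL := by
  intro m
  induction m with
  | zero =>
      intro J hJ
      have hsupp : J.support = ∅ := by
        have : J.support.ncard = 0 := Nat.le_zero.mp hJ
        exact (Set.ncard_eq_zero (Set.toFinite _)).mp this
      exact ⟨[], by simp, by simp [hsupp], by simp, by simp⟩
  | succ m ih =>
      intro J hJ
      by_cases hempty : J.support = ∅
      · exact ⟨[], by simp, by simp [hempty], by simp, by simp⟩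
      · obtain ⟨r, hr⟩ := Set.nonempty_iff_ne_empty.mpr hempty
        set W : Set (Fin n) := {u | J.Reachable r u} with hW
        have hrW : r ∈ W := SimpleGraph.Reachable.refl _
        have hcl : ∀ a b, a ∈ W → J.Adj a b → b ∈ W := by
          intro a b ha hab
          exact Set.mem_setOf.mpr ((Set.mem_setOf.mp ha).trans hab.reachable)
        have hWsupp : W ⊆ J.support := by
          intro w hw
          have hrw : J.Reachable r w := Set.mem_setOf.mp hw
          by_cases hwr : w = r
          · exact hwr ▸ hr
          · obtain ⟨p⟩ := hrw.symm
            cases p with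
            | nil => exact absurd rfl hwr
            | cons h q => exact ⟨_, h⟩
        set J' := delComp J W with hJ'
        have hsupp' : J'.support = J.support \ W := by
          ext u
          constructor
          · rintro ⟨b, h1, h2, h3⟩
            exact ⟨⟨b, h1⟩, h2⟩
          · rintro ⟨⟨b, h1⟩, h2⟩
            have hb : b ∉ W := fun hb => h2 (hcl b u hb h1.symm)
            exact ⟨b, h1, h2, hb⟩
        have hlt : J'.support.ncard ≤ m := by
          have hss : J'.support ⊂ J.support := by
            rw [hsupp']
            constructor
            · exact Set.diff_subset
            · intro hsub
              exact (hsub hr).2 hrW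
          have := Set.ncard_lt_ncard hss (Set.toFinite _)
          omega
        obtain ⟨LL', hnd', hmem', hblk', hpw'⟩ := ih J' hlt
        obtain ⟨B, hBne, hBnd, hBtr, hBmem⟩ := tree_order (J := J) r
        have hBW : ∀ x, x ∈ B ↔ x ∈ W := hBmem
        have hflatW : ∀ x, x ∈ LL'.flatten → x ∉ W := by
          intro x hx
          have := (hmem' x).mp hx
          rw [hsupp'] at this
          exact this.2
        refine ⟨B :: LL', ?_, ?_, ?_, ?_⟩
        · rw [List.flatten_cons, List.nodup_append]
          exact ⟨hBnd, hnd', fun x hx y hy hxy => by subst hxy; exact hflatW x hy ((hBW x).mp hx)⟩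
        · intro x
          rw [List.flatten_cons, List.mem_append]
          constructor
          · rintro (hx | hx)
            · exact hWsupp ((hBW x).mp hx)
            · have hx' := (hmem' x).mp hx
              rw [hsupp'] at hx'
              exact hx'.1
          · intro hx
            by_cases hxW : x ∈ W
            · exact Or.inl ((hBW x).mpr hxW)
            · refine Or.inr ((hmem' x).mpr ?_)
              rw [hsupp']
              exact ⟨hx, hxW⟩
        · intro B' hB'
          rcases List.mem_cons.mp hB' with rfl | hB'
          · exact ⟨hBne, hBtr⟩
          · obtain ⟨h1, h2⟩ := hblk' B' hB'
            exact ⟨h1, treeRev_mono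
              (fun a b hab => ((hab : J.Adj a b ∧ a ∉ W ∧ b ∉ W)).1) B' h2⟩
        · rw [List.pairwise_cons]
          constructor
          · intro B₂ hB₂ x hx y hy hreach
            have hxW : x ∈ W := (hBW x).mp hx
            have hyW : y ∉ W := hflatW y (List.mem_flatten.mpr ⟨B₂, hB₂, hy⟩)
            exact hyW ((Set.mem_setOf.mp hxW).trans hreach)
          · refine hpw'.imp_of_mem ?_
            intro B₁ B₂ hB₁ hB₂ hR x hx y hy hreach
            have hxW : x ∉ W := hflatW x (List.mem_flatten.mpr ⟨B₁, hB₁, hx⟩)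
            obtain ⟨p⟩ := hreach
            exact hR x hx y hy (reach_delComp W hW p hxW).1

/-- Fully structured decomposition, with block lengths sorted increasingly. -/
lemma struct_sorted (J : SimpleGraph (Fin n)) :
    ∃ LL : List (List (Fin n)),
      LL.flatten.Nodup ∧
      (∀ x, x ∈ LL.flatten ↔ x ∈ J.support) ∧
      (∀ B ∈ LL, B ≠ [] ∧ TreeRev J B) ∧
      List.Pairwise (fun B₁ B₂ => ∀ x ∈ B₁, ∀ y ∈ B₂, ¬ J.Reachable x y) LL ∧
      (LL.map List.length).Pairwise (· ≤ ·) := by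
  obtain ⟨LL₀, hnd, hmem, hblk, hpw⟩ := struct_aux J.support.ncard J le_rfl
  set le : List (Fin n) → List (Fin n) → Bool := fun B₁ B₂ => B₁.length ≤ B₂.length with hle
  set LL := LL₀.mergeSort le with hLL
  have hperm : LL.Perm LL₀ := List.mergeSort_perm LL₀ le
  have hpermf : LL.flatten.Perm LL₀.flatten := hperm.flatten
  refine ⟨LL, hpermf.nodup_iff.mpr hnd, ?_, ?_, ?_, ?_⟩
  · intro x
    rw [hpermf.mem_iff]
    exact hmem x
  · intro B hB
    exact hblk B (hperm.mem_iff.mp hB)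
  · exact (hperm.pairwise_iff
      (fun {B₁ B₂} h x hx y hy hr => h y hy x hx hr.symm)).mpr hpw
  · have hs := List.pairwise_mergeSort (le := le)
      (fun a b c h1 h2 => by
        simp only [hle, decide_eq_true_eq] at h1 h2 ⊢
        omega)
      (fun a b => by
        simp only [hle, Bool.or_eq_true, decide_eq_true_eq]
        omega)
      LL₀
    rw [← hLL] at hs
    exact List.Pairwise.map _ (fun {B₁ B₂} h => by
      simpa [hle] using h) hs

lemma block_edges {J : SimpleGraph (Fin n)} :
    ∀ (B : List (Fin n)), B.Nodup → TreeRev J B →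
    ∃ Ef : Finset (Sym2 (Fin n)), ↑Ef ⊆ J.edgeSet ∧ Ef.card = B.length - 1 ∧
      ∀ e ∈ Ef, ∀ x ∈ e, x ∈ B
  | [], _, _ => ⟨∅, by simp, by simp, by simp⟩
  | x :: t, hnd, htr => by
      classical
      obtain ⟨hor, htr'⟩ := htr
      rcases hor with rfl | ⟨w, hw, hadj⟩
      · exact ⟨∅, by simp, by simp, by simp⟩
      · obtain ⟨Ef', h1, h2, h3⟩ := block_edges t hnd.of_cons htr'
        have hxt : x ∉ t := (List.nodup_cons.mp hnd).1
        have hnewnotin : s(x, w) ∉ Ef' := by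
          intro hmem
          exact hxt (h3 _ hmem x (by simp))
        refine ⟨insert s(x, w) Ef', ?_, ?_, ?_⟩
        · intro e he
          rcases Finset.mem_insert.mp (by exact_mod_cast he) with rfl | he'
          · exact (J.mem_edgeSet).mpr hadj
          · exact h1 he'
        · rw [Finset.card_insert_of_notMem hnewnotin, h2]
          have : 1 ≤ t.length := by
            cases t with
            | nil => simp at hw
            | cons a b => simp
          simp only [List.length_cons]
          omega
        · intro e he y hy
          rcases Finset.mem_insert.mp he with rfl | he'
          · rcases Sym2.mem_iff.mp hy with rfl | rfl
            · simp
            · simp [hw]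
          · exact List.mem_cons_of_mem _ (h3 e he' y hy)

lemma flatten_edges {J : SimpleGraph (Fin n)} :
    ∀ (LL : List (List (Fin n))), LL.flatten.Nodup → (∀ B ∈ LL, TreeRev J B) →
    ∃ EE : Finset (Sym2 (Fin n)), ↑EE ⊆ J.edgeSet ∧
      (LL.map (fun B => B.length - 1)).sum ≤ EE.card ∧
      ∀ e ∈ EE, ∀ x ∈ e, x ∈ LL.flatten
  | [], _, _ => ⟨∅, by simp, by simp, by simp⟩
  | B :: T, hnd, htr => by
      classical
      rw [List.flatten_cons, List.nodup_append] at hnd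
      obtain ⟨hndB, hndT, hdisj⟩ := hnd
      obtain ⟨EB, hb1, hb2, hb3⟩ := block_edges B hndB (htr B (by simp))
      obtain ⟨ET, ht1, ht2, ht3⟩ := flatten_edges T hndT (fun B' h => htr B' (by simp [h]))
      have hdisjE : Disjoint EB ET := by
        rw [Finset.disjoint_left]
        intro e heB heT
        have hx := Sym2.out_fst_mem e
        exact hdisj _ (hb3 e heB _ hx) _ (ht3 e heT _ hx) rfl
      refine ⟨EB ∪ ET, ?_, ?_, ?_⟩
      · intro e he
        rcases Finset.mem_union.mp (by exact_mod_cast he) with h | h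
        · exact hb1 h
        · exact ht1 h
      · rw [Finset.card_union_of_disjoint hdisjE]
        simp only [List.map_cons, List.sum_cons]
        omega
      · intro e he y hy
        rw [List.flatten_cons, List.mem_append]
        rcases Finset.mem_union.mp he with h | h
        · exact Or.inl (hb3 e h y hy)
        · exact Or.inr (ht3 e h y hy)

lemma map_pred_sum : ∀ (l : List ℕ), (∀ k ∈ l, 1 ≤ k) →
    (l.map (fun k => k - 1)).sum = l.sum - l.length
  | [], _ => rfl
  | a :: t, h => by
      have ht := map_pred_sum t (fun b hb => h b (by simp [hb]))
      have hts := length_le_sum (l := t) (fun b hb => h b (by simp [hb]))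
      have hk := h a (by simp)
      simp only [List.map_cons, List.sum_cons, List.length_cons]
      omega

lemma comp_bound {J : SimpleGraph (Fin n)} (hn : 0 < n) (LL : List (List (Fin n)))
    (hne : ∀ B ∈ LL, B ≠ [])
    (hmem : ∀ x, x ∈ LL.flatten → x ∈ J.support)
    (hpw : List.Pairwise (fun B₁ B₂ => ∀ x ∈ B₁, ∀ y ∈ B₂, ¬ J.Reachable x y) LL) :
    LL.length ≤ ({C : J.ConnectedComponent | ∃ v ∈ J.support,
      J.connectedComponentMk v = C}).ncard := by
  classical
  haveI : Inhabited (Fin n) := ⟨⟨0, hn⟩⟩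
  set f : List (Fin n) → J.ConnectedComponent := fun B => J.connectedComponentMk B.headI
    with hf
  have hhead : ∀ B ∈ LL, B.headI ∈ B := by
    intro B hB
    cases B with
    | nil => exact absurd rfl (hne _ hB)
    | cons a t => simp
  have hstep : LL.Pairwise (fun B₁ B₂ => f B₁ ≠ f B₂) := by
    refine hpw.imp_of_mem ?_
    intro B₁ B₂ h1 h2 hR heq
    exact hR B₁.headI (hhead _ h1) B₂.headI (hhead _ h2)
      (SimpleGraph.ConnectedComponent.eq.mp heq)
  have hnd2 : (LL.map f).Pairwise (· ≠ ·) := List.pairwise_map.mpr hstep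
  have hndmap : (LL.map f).Nodup := hnd2
  have hsub : ↑(LL.map f).toFinset ⊆ {C : J.ConnectedComponent | ∃ v ∈ J.support,
      J.connectedComponentMk v = C} := by
    intro C hC
    simp only [Finset.coe_insert, List.coe_toFinset, Set.mem_setOf_eq, List.mem_map] at hC
    obtain ⟨B, hB, rfl⟩ := hC
    exact ⟨B.headI, hmem _ (List.mem_flatten.mpr ⟨B, hB, hhead B hB⟩), rfl⟩
  calc LL.length = (LL.map f).length := by simp
    _ = (LL.map f).toFinset.card := (List.toFinset_card_of_nodup hndmap).symm
    _ = (↑(LL.map f).toFinset : Set J.ConnectedComponent).ncard := by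
        rw [Set.ncard_coe_finset]
    _ ≤ _ := Set.ncard_le_ncard hsub (Set.toFinite _)

end Struct

section Perms

variable (F I : SimpleGraph (Fin n))

open scoped Classical in
/-- The finset of "good" permutations. -/
noncomputable def GPf : Finset (Equiv.Perm (Fin n)) :=
  Finset.univ.filter (fun σ => ∀ a b, I.Adj a b → F.Adj (σ a) (σ b))

open scoped Classical in
lemma mem_GPf {σ : Equiv.Perm (Fin n)} :
    σ ∈ GPf F I ↔ ∀ a b, I.Adj a b → F.Adj (σ a) (σ b) := by
  simp [GPf]

open scoped Classical in
lemma perm_bound :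
    (GPf F I).card ≤ (CntF F I (Set.toFinite I.support).toFinset).card
      * (n - (Set.toFinite I.support).toFinset.card).factorial := by
  classical
  set Sf := (Set.toFinite I.support).toFinset with hSf
  set v := Sf.card with hv
  set g : Equiv.Perm (Fin n) → (Fin n → Fin n) :=
    fun σ x => if x ∈ Sf then σ x else x with hg
  have hmaps : ∀ σ ∈ GPf F I, g σ ∈ CntF F I Sf := by
    intro σ hσ
    rw [mem_GPf] at hσ
    rw [mem_CntF]
    refine ⟨?_, ?_, ?_⟩
    · intro a ha b hb hab
      simp only [hg, Finset.mem_coe.mp ha, Finset.mem_coe.mp hb, if_pos] at hab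
      exact σ.injective hab
    · intro a ha b hb hab
      simp only [hg]
      rw [if_pos ha, if_pos hb]
      exact hσ a b hab
    · intro x hx
      simp only [hg]
      rw [if_neg hx]
  rw [Finset.card_eq_sum_card_fiberwise hmaps]
  have hfiber : ∀ φ ∈ CntF F I Sf,
      ((GPf F I).filter (fun σ => g σ = φ)).card ≤ (n - v).factorial := by
    intro φ hφ
    obtain ⟨hinj, -, -⟩ := (mem_CntF F I).mp hφ
    have hc1 : Fintype.card {x : Fin n // x ∉ Sf} = n - v := by
      rw [Fintype.card_subtype_compl]
      simp [Fintype.card_fin, hv, Fintype.card_coe]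
    have hc2 : Fintype.card {y : Fin n // y ∉ Sf.image φ} = n - v := by
      rw [Fintype.card_subtype_compl]
      simp only [Fintype.card_fin]
      congr 1
      rw [Fintype.card_coe, Finset.card_image_of_injOn hinj]
    -- map each fiber element to an embedding between complements
    have key : ∀ σ ∈ (GPf F I).filter (fun σ => g σ = φ),
        ∀ x : Fin n, x ∉ Sf → σ x ∉ Sf.image φ := by
      intro σ hσ x hx
      rw [Finset.mem_filter] at hσ
      intro hmem
      obtain ⟨s', hs', hs'2⟩ := Finset.mem_image.mp hmem
      have : φ s' = σ s' := by rw [← hσ.2]; simp only [hg]; rw [if_pos hs']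
      rw [this] at hs'2
      exact hx (σ.injective hs'2 ▸ hs')
    set emb : (σ : Equiv.Perm (Fin n)) → σ ∈ (GPf F I).filter (fun σ => g σ = φ) →
        ({x : Fin n // x ∉ Sf} ↪ {y : Fin n // y ∉ Sf.image φ}) :=
      fun σ hσ => ⟨fun x => ⟨σ x.1, key σ hσ x.1 x.2⟩,
        fun a b hab => Subtype.ext (σ.injective (congrArg Subtype.val hab))⟩ with hemb
    have hcard : ((GPf F I).filter (fun σ => g σ = φ)).card
        ≤ Fintype.card ({x : Fin n // x ∉ Sf} ↪ {y : Fin n // y ∉ Sf.image φ}) := by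
      rw [← Fintype.card_coe ((GPf F I).filter (fun σ => g σ = φ))]
      refine Fintype.card_le_of_injective (fun p => emb p.1 p.2) ?_
      rintro ⟨σ₁, h₁⟩ ⟨σ₂, h₂⟩ hEq
      refine Subtype.ext (Equiv.ext (fun x => ?_))
      by_cases hx : x ∈ Sf
      · have e1 : φ x = σ₁ x := by
          rw [← (Finset.mem_filter.mp h₁).2]; simp only [hg]; rw [if_pos hx]
        have e2 : φ x = σ₂ x := by
          rw [← (Finset.mem_filter.mp h₂).2]; simp only [hg]; rw [if_pos hx]
        rw [← e1, ← e2]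
      · have := congrFun (congrArg (fun (f : {x : Fin n // x ∉ Sf} ↪
          {y : Fin n // y ∉ Sf.image φ}) => (f : {x : Fin n // x ∉ Sf} →
          {y : Fin n // y ∉ Sf.image φ})) hEq) ⟨x, hx⟩
        exact congrArg Subtype.val this
    calc ((GPf F I).filter (fun σ => g σ = φ)).card
        ≤ Fintype.card ({x : Fin n // x ∉ Sf} ↪ {y : Fin n // y ∉ Sf.image φ}) := hcard
      _ = (n - v).descFactorial (n - v) := by rw [Fintype.card_embedding_eq, hc1, hc2]
      _ = (n - v).factorial := Nat.descFactorial_self _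
  calc ∑ φ ∈ CntF F I Sf, ((GPf F I).filter (fun σ => g σ = φ)).card
      ≤ ∑ _φ ∈ CntF F I Sf, (n - v).factorial := Finset.sum_le_sum hfiber
    _ = (CntF F I Sf).card * (n - v).factorial := by
        rw [Finset.sum_const, smul_eq_mul]

lemma copies_bound :
    ({G' : SimpleGraph (Fin n) | Nonempty (F ≃g G') ∧ I ≤ G'}).ncard
      * Nat.card (F ≃g F) ≤ (GPf F I).card := by
  classical
  haveI : Finite (SimpleGraph (Fin n)) :=
    Finite.of_injective (fun G => G.Adj) (fun a b h => SimpleGraph.ext h)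
  set Cop := {G' : SimpleGraph (Fin n) | Nonempty (F ≃g G') ∧ I ≤ G'} with hCop
  set E : ↥Cop × (F ≃g F) → Equiv.Perm (Fin n) :=
    fun p => (p.1.2.1.some.symm.toEquiv).trans p.2.toEquiv with hE
  have hEgood : ∀ p, E p ∈ GPf F I := by
    rintro ⟨⟨G', hG'⟩, a⟩
    rw [mem_GPf]
    intro x y hxy
    have h1 : G'.Adj x y := hG'.2 hxy
    have h2 := (hG'.1.some.symm.map_rel_iff (a := x) (b := y)).mpr h1
    exact (a.map_rel_iff).mpr h2
  have hadj : ∀ p : ↥Cop × (F ≃g F), ∀ x y,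
      (p.1 : SimpleGraph (Fin n)).Adj x y ↔ F.Adj (E p x) (E p y) := by
    rintro ⟨⟨G', hG'⟩, a⟩ x y
    simp only [hE, Equiv.trans_apply]
    constructor
    · intro h
      exact a.map_rel_iff.mpr ((hG'.1.some.symm.map_rel_iff).mpr h)
    · intro h
      exact (hG'.1.some.symm.map_rel_iff).mp (a.map_rel_iff.mp h)
  have hEinj : Function.Injective E := by
    rintro ⟨⟨G₁, hG₁⟩, a₁⟩ ⟨⟨G₂, hG₂⟩, a₂⟩ hEq
    have hGeq : G₁ = G₂ := by
      apply SimpleGraph.ext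
      funext x y
      have h1 := hadj ⟨⟨G₁, hG₁⟩, a₁⟩ x y
      have h2 := hadj ⟨⟨G₂, hG₂⟩, a₂⟩ x y
      rw [hEq] at h1
      rw [propext (h1.trans h2.symm)]
    subst hGeq
    have haeq : a₁ = a₂ := by
      apply RelIso.ext
      intro z
      have := congrFun (congrArg (fun (e : Equiv.Perm (Fin n)) => (e : Fin n → Fin n)) hEq)
        (hG₁.1.some z)
      simpa [hE] using this
    rw [haeq]
  have hcard : Nat.card (↥Cop × (F ≃g F)) ≤ Nat.card {σ : Equiv.Perm (Fin n) // σ ∈ GPf F I} := by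
    refine Nat.card_le_card_of_injective (fun p => ⟨E p, hEgood p⟩) ?_
    intro p₁ p₂ h
    exact hEinj (congrArg Subtype.val h)
  rw [Nat.card_prod, Nat.card_coe_set_eq] at hcard
  have hfin : Nat.card { σ // σ ∈ GPf F I } = (GPf F I).card := by
    rw [Nat.card_eq_fintype_card]
    exact Fintype.card_coe _
  rwa [hfin] at hcard

end Perms

end Stmt12


/-- The number of connected components of a graph `I` on `[n]` viewed as an edge set
(isolated vertices are not counted). -/
noncomputable def graphComponents {n : ℕ} (I : SimpleGraph (Fin n)) : ℕ :=
  ({C : I.ConnectedComponent |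
    ∃ v ∈ I.support, I.connectedComponentMk v = C}).ncard

/-- Let `F` be a spanning subgraph of `K_n` with maximum degree at
most `d`, and let `I` be a subgraph of `K_n` with `c` connected components, contained
in at least one copy of `F`. Then the number of copies of `F` in `K_n` containing `I`
is at most `(2d)^{|E(I)|}/|Aut(F)| · (n - v(I) + c)!`, where `v(I)` is the number of
non-isolated vertices of `I`. -/
theorem stmt_12 (n d : ℕ) (F : SimpleGraph (Fin n))
    (hdeg : ∀ v : Fin n, (F.neighborSet v).ncard ≤ d)
    (I : SimpleGraph (Fin n))
    (hI : ∃ G' : SimpleGraph (Fin n), Nonempty (F ≃g G') ∧ I ≤ G') :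
    (({G' : SimpleGraph (Fin n) | Nonempty (F ≃g G') ∧ I ≤ G'}).ncard : ℝ)
      ≤ (2 * d : ℝ) ^ I.edgeSet.ncard / (Nat.card (F ≃g F) : ℝ)
        * (Nat.factorial (n - I.support.ncard + graphComponents I) : ℝ) := by
  classical
  open Stmt12 in
  let v := I.support.ncard
  let c := graphComponents I
  let e := I.edgeSet.ncard
  obtain ⟨LL, hnd, hmem, hblk, hpw, hsort⟩ := Stmt12.struct_sorted I
  set lens := LL.map List.length with hlens
  set Sf := (Set.toFinite I.support).toFinset with hSf
  -- basic identifications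
  have hSfeq : LL.flatten.toFinset = Sf := by
    ext x
    rw [List.mem_toFinset, hSf, Set.Finite.mem_toFinset]
    exact hmem x
  have hSfcard : Sf.card = v := (Set.ncard_eq_toFinset_card _ _).symm
  have hsum : lens.sum = v := by
    rw [hlens, ← List.length_flatten, ← List.toFinset_card_of_nodup hnd, hSfeq, hSfcard]
  have hone : ∀ k ∈ lens, 1 ≤ k := by
    intro k hk
    rw [hlens, List.mem_map] at hk
    obtain ⟨B, hB, rfl⟩ := hk
    have := (hblk B hB).1
    cases B with
    | nil => exact absurd rfl this
    | cons a t => simp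
  have hvn : v ≤ n := by
    rw [← hSfcard]
    simpa [Fintype.card_fin] using Finset.card_le_card (Finset.subset_univ Sf)
  -- counting chain
  have h1 := Stmt12.copies_bound F I
  have h2 := Stmt12.perm_bound F I
  have h3 : (Stmt12.CntF F I Sf).card ≤ Stmt12.Rfun n d lens := by
    rw [← hSfeq]
    exact Stmt12.cnt_flatten d hdeg LL hnd hblk
  have h4 := Stmt12.art n d lens hsort hone 0 0 (fun k _ => by omega) (by omega)
  -- edge count
  have hvce : lens.sum - lens.length ≤ e := by
    obtain ⟨EE, hE1, hE2, -⟩ := Stmt12.flatten_edges LL hnd (fun B hB => (hblk B hB).2)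
    have hmap : LL.map (fun B => B.length - 1) = lens.map (fun k => k - 1) := by
      rw [hlens, List.map_map]
      rfl
    rw [hmap, Stmt12.map_pred_sum lens hone] at hE2
    calc lens.sum - lens.length ≤ EE.card := hE2
      _ = (↑EE : Set (Sym2 (Fin n))).ncard := (Set.ncard_coe_finset _).symm
      _ ≤ e := Set.ncard_le_ncard hE1 (Set.toFinite _)
  -- power monotonicity
  have hpow : (2 * d) ^ (lens.sum - lens.length) ≤ (2 * d) ^ e := by
    by_cases he : e = 0
    · have : lens.sum - lens.length = 0 := by omega
      rw [this, he]
    · have hd : 1 ≤ d := by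
        obtain ⟨ed, hed⟩ := Set.nonempty_of_ncard_ne_zero he
        obtain ⟨G', ⟨iso⟩, hle⟩ := hI
        induction ed with
        | _ a b =>
          have hab : I.Adj a b := hed
          have hG' : G'.Adj a b := hle hab
          have hF : F.Adj (iso.symm a) (iso.symm b) := iso.symm.map_rel_iff.mpr hG'
          have : (F.neighborSet (iso.symm a)).ncard ≠ 0 := by
            intro h0
            have := (Set.ncard_eq_zero (Set.toFinite _)).mp h0
            rw [Set.eq_empty_iff_forall_notMem] at this
            exact this _ hF
          have := hdeg (iso.symm a)
          omega
      exact Nat.pow_le_pow_right (by omega) hvce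
  -- component count
  have hcle : LL.length ≤ c := by
    cases hLL : LL with
    | nil => simp
    | cons B T =>
        have hBne := (hblk B (by rw [hLL]; simp)).1
        have hn : 0 < n := by
          cases hB : B with
          | nil => exact absurd hB hBne
          | cons x t => exact x.pos
        rw [← hLL]
        exact Stmt12.comp_bound hn LL (fun B' hB' => (hblk B' hB').1)
          (fun x hx => (hmem x).mp hx) hpw
  -- assemble in ℕ
  have hnat : ({G' : SimpleGraph (Fin n) | Nonempty (F ≃g G') ∧ I ≤ G'}).ncard
      * Nat.card (F ≃g F) ≤ (2 * d) ^ e * (n - v + c).factorial := by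
    have e1 : n - lens.sum - 0 + 0 = n - v := by omega
    rw [e1] at h4
    calc ({G' : SimpleGraph (Fin n) | Nonempty (F ≃g G') ∧ I ≤ G'}).ncard
          * Nat.card (F ≃g F)
        ≤ (Stmt12.GPf F I).card := h1
      _ ≤ (Stmt12.CntF F I Sf).card * (n - Sf.card).factorial := h2
      _ ≤ Stmt12.Rfun n d lens * (n - v).factorial := by
          rw [hSfcard]
          exact Nat.mul_le_mul_right _ h3
      _ ≤ (2 * d) ^ (lens.sum - lens.length) * (n - v + lens.length).factorial := h4
      _ ≤ (2 * d) ^ e * (n - v + c).factorial := by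
          refine Nat.mul_le_mul hpow (Nat.factorial_le ?_)
          have : lens.length = LL.length := by rw [hlens]; simp
          omega
  -- move to ℝ
  haveI : Finite (F ≃g F) :=
    Finite.of_injective (fun f : F ≃g F => f.toEquiv)
      (fun a b h => by cases a; cases b; simpa using h)
  haveI : Nonempty (F ≃g F) := ⟨RelIso.refl _⟩
  have hAu : 0 < (Nat.card (F ≃g F) : ℝ) := by
    exact_mod_cast Nat.card_pos
  rw [div_mul_eq_mul_div, le_div_iff₀ hAu]
  calc (({G' : SimpleGraph (Fin n) | Nonempty (F ≃g G') ∧ I ≤ G'}).ncard : ℝ)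
        * (Nat.card (F ≃g F) : ℝ)
      ≤ (((2 * d) ^ e * (n - v + c).factorial : ℕ) : ℝ) := by exact_mod_cast hnat
    _ = (2 * d : ℝ) ^ I.edgeSet.ncard * (Nat.factorial (n - I.support.ncard + graphComponents I) : ℝ) := by
        push_cast
        rfl
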